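/- For every positive integer n, the finite sum over k from 0 to n-1 of 1/(1 + 2·sin²(kπ/(2n))) equals (n/√3)·(2/(1 - (2 - √3)^(2n)) - 1) + 1/3. -/

import Mathlib

open Real


lemma sum_inv_root_sub (N : ℕ) (hN : 0 < N) (a : ℂ) (ha : a ^ N ≠ 1) :
    ∑ k ∈ Finset.range N, 1 / (Complex.exp (2 * π * Complex.I / N) ^ k - a)
      = N * a ^ (N - 1) / (1 - a ^ N) := by
  set ω : ℂ := Complex.exp (2 * π * Complex.I / N) with hω_def
  have hprim : IsPrimitiveRoot ω N := Complex.isPrimitiveRoot_exp N hN.ne'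
  have hωN : ω ^ N = 1 := hprim.pow_eq_one
  have ha1 : (1 : ℂ) - a ^ N ≠ 0 := sub_ne_zero.mpr (fun h => ha h.symm)
  have key : ∀ k, 1 / (ω ^ k - a)
      = (∑ m ∈ Finset.range N, a ^ m * (ω ^ k) ^ (N - 1 - m)) / (1 - a ^ N) := by
    intro k
    have hzk : (ω ^ k) ^ N = 1 := by
      rw [← pow_mul, mul_comm, pow_mul, hωN, one_pow]
    have hne : ω ^ k - a ≠ 0 := by
      intro h
      apply ha
      rw [← sub_eq_zero.mp h] at *
      exact hzk
    have hg := geom_sum₂_mul a (ω ^ k) N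
    rw [hzk] at hg
    rw [div_eq_div_iff hne ha1, one_mul]
    calc (1 : ℂ) - a ^ N = -(a ^ N - 1) := by ring
      _ = -((∑ m ∈ Finset.range N, a ^ m * (ω ^ k) ^ (N - 1 - m)) * (a - ω ^ k)) := by rw [hg]
      _ = (∑ m ∈ Finset.range N, a ^ m * (ω ^ k) ^ (N - 1 - m)) * (ω ^ k - a) := by ring
  simp only [key]
  rw [← Finset.sum_div]
  congr 1
  rw [Finset.sum_comm]
  have inner : ∀ m ∈ Finset.range N,
      (∑ k ∈ Finset.range N, a ^ m * (ω ^ k) ^ (N - 1 - m))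
        = if m = N - 1 then (N : ℂ) * a ^ (N - 1) else 0 := by
    intro m hm
    rw [Finset.mem_range] at hm
    by_cases hmN : m = N - 1
    · subst hmN
      simp [Nat.sub_self, mul_comm]
    · have hj : 0 < N - 1 - m := by omega
      have hjN : N - 1 - m < N := by omega
      have hne1 : ω ^ (N - 1 - m) ≠ 1 := hprim.pow_ne_one_of_pos_of_lt hj.ne' hjN
      have : ∑ k ∈ Finset.range N, (ω ^ (N - 1 - m)) ^ k = 0 := by
        rw [geom_sum_eq hne1]
        rw [← pow_mul, mul_comm, pow_mul, hωN, one_pow, sub_self, zero_div]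
      calc ∑ k ∈ Finset.range N, a ^ m * (ω ^ k) ^ (N - 1 - m)
          = a ^ m * ∑ k ∈ Finset.range N, (ω ^ (N - 1 - m)) ^ k := by
            rw [Finset.mul_sum]
            congr 1; ext k
            rw [← pow_mul, ← pow_mul, mul_comm (N-1-m) k]
        _ = 0 := by rw [this, mul_zero]
      simp [hmN]
  rw [Finset.sum_congr rfl inner, Finset.sum_ite_eq' (Finset.range N) (N-1)]
  simp [Nat.sub_lt hN]



lemma sym_step (n : ℕ) (hn : 0 < n) :
    ∑ k ∈ Finset.range (2*n), 1 / (2 - Real.cos ((k:ℝ) * π / n))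
      = 2 * (∑ k ∈ Finset.range n, 1 / (2 - Real.cos ((k:ℝ) * π / n))) - 2/3 := by
  have hn' : (n:ℝ) ≠ 0 := Nat.cast_ne_zero.mpr hn.ne'
  set f : ℕ → ℝ := fun k => 1 / (2 - Real.cos ((k:ℝ) * π / n)) with hf
  have h2n : 2*n = n + n := by ring
  rw [h2n, Finset.sum_range_add]
  have hrefl : ∑ i ∈ Finset.range n, f (n + i) = ∑ i ∈ Finset.range n, f (n + (n-1-i)) :=
    (Finset.sum_range_reflect (fun i => f (n+i)) n).symm
  have hswap : ∀ i ∈ Finset.range n, f (n + (n-1-i)) = f (i+1) := by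
    intro i hi
    rw [Finset.mem_range] at hi
    simp only [hf]
    congr 1
    have hc : ((n + (n-1-i) : ℕ) : ℝ) = 2*n - 1 - i := by
      push_cast [Nat.cast_sub (by omega : i ≤ n - 1), Nat.cast_sub (by omega : 1 ≤ n)]
      ring
    rw [hc]
    have : (2*(n:ℝ) - 1 - i) * π / n = 2*π - ((i:ℝ)+1) * π / n := by
      field_simp; ring
    rw [this, Real.cos_two_pi_sub]
    push_cast; ring_nf
  rw [hrefl, Finset.sum_congr rfl hswap]
  have hsucc : ∑ i ∈ Finset.range n, f (i+1) = (∑ i ∈ Finset.range (n+1), f i) - f 0 := by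
    rw [Finset.sum_range_succ']; ring
  rw [hsucc, Finset.sum_range_succ]
  have hf0 : f 0 = 1 := by norm_num [hf]
  have hfn : f n = 1/3 := by
    simp only [hf]
    have hπ : (n:ℝ) * π / n = π := by field_simp
    rw [hπ, Real.cos_pi]
    norm_num
  rw [hf0, hfn]; ring

lemma complex_step (n : ℕ) (hn : 0 < n) :
    ∑ k ∈ Finset.range (2*n), 1 / (2 - Real.cos ((k:ℝ) * π / n))
      = (2*(n:ℝ) / Real.sqrt 3) * ((1 + (2 - Real.sqrt 3)^(2*n)) / (1 - (2 - Real.sqrt 3)^(2*n))) := by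
  have hn' : (n:ℝ) ≠ 0 := Nat.cast_ne_zero.mpr hn.ne'
  set s : ℝ := Real.sqrt 3 with hs
  have hs2 : s^2 = 3 := Real.sq_sqrt (by norm_num)
  have hs1 : 1 < s := by nlinarith [Real.sqrt_nonneg 3]
  have hslt2 : s < 2 := by nlinarith [Real.sqrt_nonneg 3]
  have hs0 : (0:ℝ) < s := by linarith
  set N := 2*n with hN
  have hNpos : 0 < N := by omega
  set sc : ℂ := (s : ℂ) with hsc
  have hsc2 : sc^2 = 3 := by rw [hsc, ← Complex.ofReal_pow, hs2]; norm_num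
  have hsc0 : sc ≠ 0 := by simp [hsc]; linarith
  set α : ℂ := 2 + sc with hα
  set β : ℂ := 2 - sc with hβ
  set ω : ℂ := Complex.exp (2 * π * Complex.I / N) with hω
  -- powers of α and β
  have hαN : α ^ N = ((2 + s : ℝ)^N : ℂ) := by push_cast [hα, hsc]; ring
  have hβN : β ^ N = ((2 - s : ℝ)^N : ℂ) := by push_cast [hβ, hsc]; ring
  have hβr0 : (0:ℝ) < 2 - s := by linarith
  have hβr1 : (2 - s : ℝ) < 1 := by linarith
  have hβN1 : (2 - s : ℝ)^N < 1 := pow_lt_one₀ hβr0.le hβr1 hNpos.ne'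
  have hαN1 : (1:ℝ) < (2 + s)^N := one_lt_pow₀ (by linarith) hNpos.ne'
  have haα : α ^ N ≠ 1 := by
    rw [hαN]
    intro h
    have : ((2 + s : ℝ)^N : ℝ) = 1 := by exact_mod_cast h
    linarith
  have haβ : β ^ N ≠ 1 := by
    rw [hβN]
    intro h
    have : ((2 - s : ℝ)^N : ℝ) = 1 := by exact_mod_cast h
    linarith
  -- per-term identity
  have hterm : ∀ k : ℕ, ((1 / (2 - Real.cos ((k:ℝ) * π / n)) : ℝ) : ℂ)
      = (1/sc) * (β/(ω^k - β) - α/(ω^k - α)) := by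
    intro k
    set θ : ℝ := (k:ℝ) * π / n with hθ
    have hz : ω ^ k = Complex.exp ((θ:ℂ) * Complex.I) := by
      rw [hω, ← Complex.exp_nat_mul]
      congr 1
      have hNc : ((N:ℕ):ℂ) ≠ 0 := by
        simp [hN]; exact_mod_cast hn.ne'
      rw [hθ, hN]
      push_cast
      field_simp
    have habs : ‖ω ^ k‖ = 1 := by rw [hz]; exact Complex.norm_exp_ofReal_mul_I θ
    have hzne0 : ω ^ k ≠ 0 := by
      intro h; rw [h] at habs; simp at habs
    have hzneα : ω ^ k - α ≠ 0 := by
      intro h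
      have := sub_eq_zero.mp h
      rw [this] at habs
      rw [hα, hsc] at habs
      have : ‖((2 + s : ℝ) : ℂ)‖ = 2 + s := by
        rw [Complex.norm_real, Real.norm_eq_abs]; rw [abs_of_pos]; linarith
      simp only [Complex.ofReal_add, Complex.ofReal_ofNat] at this ⊢
      rw [this] at habs
      linarith
    have hzneβ : ω ^ k - β ≠ 0 := by
      intro h
      have := sub_eq_zero.mp h
      rw [this] at habs
      rw [hβ, hsc] at habs
      have : ‖((2 - s : ℝ) : ℂ)‖ = 2 - s := by
        rw [Complex.norm_real, Real.norm_eq_abs]; rw [abs_of_pos]; linarith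
      simp only [Complex.ofReal_sub, Complex.ofReal_ofNat] at this ⊢
      rw [this] at habs
      linarith
    have hcos : ((Real.cos θ : ℝ) : ℂ) = (ω^k + (ω^k)⁻¹) / 2 := by
      have e1 : Complex.cos (θ:ℂ) = (Complex.exp ((θ:ℂ)*Complex.I) + Complex.exp (-(θ:ℂ)*Complex.I))/2 := rfl
      have e2 : Complex.exp (-(θ:ℂ)*Complex.I) = (ω^k)⁻¹ := by
        rw [hz, ← Complex.exp_neg]; congr 1; ring
      rw [Complex.ofReal_cos, e1, e2, hz]
    push_cast
    rw [← Complex.ofReal_cos, hcos]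
    have hden : (2 : ℂ) - (ω^k + (ω^k)⁻¹)/2 ≠ 0 := by
      have hreal : ((2 - Real.cos θ : ℝ) : ℂ) = 2 - (ω^k + (ω^k)⁻¹)/2 := by
        push_cast; rw [← Complex.ofReal_cos, hcos]
      rw [← hreal]
      simp only [ne_eq, Complex.ofReal_eq_zero]
      have := Real.cos_le_one θ
      intro h; linarith
    have hfac : (2:ℂ) - (ω^k+(ω^k)⁻¹)/2 = -((ω^k-α)*(ω^k-β))/(2*ω^k) := by
      rw [hα, hβ]
      field_simp
      ring_nf
      linear_combination -hsc2
    rw [hfac, one_div_div]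
    field_simp
    ring
  -- sum it up
  have hb1 : (1:ℂ)-β^N ≠ 0 := sub_ne_zero.mpr (fun h => haβ h.symm)
  have ha1 : (1:ℂ)-α^N ≠ 0 := sub_ne_zero.mpr (fun h => haα h.symm)
  have hαβ : α*β = 1 := by rw [hα, hβ]; linear_combination -hsc2
  have hABn : α^N * β^N = 1 := by rw [← mul_pow, hαβ, one_pow]
  have hsum : ((∑ k ∈ Finset.range N, 1 / (2 - Real.cos ((k:ℝ) * π / n)) : ℝ) : ℂ)
      = (1/sc) * (β * (∑ k ∈ Finset.range N, 1/(ω^k - β))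
          - α * (∑ k ∈ Finset.range N, 1/(ω^k - α))) := by
    rw [Complex.ofReal_sum]
    rw [Finset.sum_congr rfl (fun k _ => hterm k)]
    rw [Finset.mul_sum, Finset.mul_sum, ← Finset.sum_sub_distrib, ← Finset.mul_sum]
    congr 1
    apply Finset.sum_congr rfl
    intro k _
    rw [mul_one_div, mul_one_div]
  rw [sum_inv_root_sub N hNpos β haβ, sum_inv_root_sub N hNpos α haα] at hsum
  have hBpow : β * β^(N-1) = β^N := by
    rw [← pow_succ']
    congr 1
    omega
  have hApow : α * α^(N-1) = α^N := by
    rw [← pow_succ']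
    congr 1
    omega
  have e1 : β * ((N:ℂ) * β^(N-1)/(1-β^N)) = (N:ℂ) * β^N/(1-β^N) := by
    rw [← hBpow]; ring
  have e2 : α * ((N:ℂ) * α^(N-1)/(1-α^N)) = (N:ℂ) * α^N/(1-α^N) := by
    rw [← hApow]; ring
  have key : ∀ X Y : ℂ, X*Y = 1 → 1-X ≠ 0 → 1-Y ≠ 0 →
      (1/sc)*((N:ℂ)*Y/(1-Y) - (N:ℂ)*X/(1-X)) = ((N:ℂ)/sc)*((1+Y)/(1-Y)) := by
    intro X Y h hX hY
    field_simp
    linear_combination (N:ℂ) * h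
  rw [e1, e2, key (α^N) (β^N) hABn ha1 hb1] at hsum
  have hrhs : ((N:ℂ)/sc) * ((1+β^N)/(1-β^N))
      = (((2*(n:ℝ) / s) * ((1 + (2-s)^(2*n)) / (1 - (2-s)^(2*n))) : ℝ) : ℂ) := by
    rw [hβN, hsc]
    push_cast [hN]
    ring
  rw [hrhs] at hsum
  exact_mod_cast hsum

theorem trig_sum_closed_form (n : ℕ) (hn : 0 < n) :
    ∑ k ∈ Finset.range n, 1 / (1 + 2 * Real.sin ((k : ℝ) * π / (2 * n)) ^ 2)
      = ((n : ℝ) / Real.sqrt 3) * (2 / (1 - (2 - Real.sqrt 3) ^ (2 * n)) - 1) + 1 / 3 := by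
  have hn' : (n:ℝ) ≠ 0 := Nat.cast_ne_zero.mpr hn.ne'
  set s : ℝ := Real.sqrt 3 with hs
  have hs2 : s^2 = 3 := Real.sq_sqrt (by norm_num)
  have hs1 : 1 < s := by nlinarith [Real.sqrt_nonneg 3]
  have hslt2 : s < 2 := by nlinarith [Real.sqrt_nonneg 3]
  have hs0 : (0:ℝ) < s := by linarith
  set q : ℝ := (2 - s)^(2*n) with hq
  have hq1 : q < 1 := pow_lt_one₀ (by linarith) (by linarith) (by omega)
  have h1q : (1:ℝ) - q ≠ 0 := by intro h; nlinarith [h]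
  -- step 1 : rewrite terms
  have hL1 : ∑ k ∈ Finset.range n, 1 / (1 + 2 * Real.sin ((k : ℝ) * π / (2 * n)) ^ 2)
      = ∑ k ∈ Finset.range n, 1 / (2 - Real.cos ((k:ℝ) * π / n)) := by
    apply Finset.sum_congr rfl
    intro k _
    congr 1
    have hx : (k:ℝ)*π/n = 2*((k:ℝ)*π/(2*n)) := by field_simp
    rw [hx]
    have h1 := Real.cos_two_mul ((k:ℝ)*π/(2*n))
    have h2 := Real.sin_sq_add_cos_sq ((k:ℝ)*π/(2*n))
    linarith
  rw [hL1]
  have hT2 := sym_step n hn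
  have hT3 := complex_step n hn
  rw [hT2] at hT3
  have hfrac : 2 / (1 - q) - 1 = (1 + q)/(1 - q) := by
    field_simp
    ring
  rw [hfrac]
  have : ∑ k ∈ Finset.range n, 1 / (2 - Real.cos ((k:ℝ) * π / n))
      = ((2 * (n:ℝ) / s) * ((1 + q) / (1 - q)) + 2/3) / 2 := by linarith
  rw [this]
  ring
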